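/- Let (B_n) be finite subsets of countable S with B_n ↑ S, Q nonnegative with finite Green's function G, and (μ̄_{B_n}) a consistent entrance family: μ̄_{B_n}(y) = 1_{B_n}(y) Σ_{x} μ̄_{B_{n+1}}(x) Σ_{m≥0} Σ over paths x = x_0,…,x_m = y with x_0,…,x_{m-1} ∉ B_n of Q(x_0,x_1)⋯Q(x_{m-1},x_m). Define ν_n = μ̄_{B_n} G restricted to B_n. Then the family is consistent: for x ∈ B_n, (μ̄_{B_{n+1}} G)(x) = (μ̄_{B_n} G)(x), so ν := lim_n ν_n is a well-defined measure on S. -/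

import Mathlib

open scoped ENNReal

/-- Entrywise matrix powers of a nonnegative kernel `Q` on a countable set `S`. -/
noncomputable def qpow {S : Type*} [DecidableEq S] (Q : S → S → ℝ≥0∞) : ℕ → S → S → ℝ≥0∞
  | 0 => fun x y => if x = y then 1 else 0
  | n + 1 => fun x y => ∑' z, Q x z * qpow Q n z y

/-- Green's function `G = Σ_{n ≥ 0} Q^n` (entrywise, in `ℝ≥0∞`). -/
noncomputable def green {S : Type*} [DecidableEq S] (Q : S → S → ℝ≥0∞) (x y : S) : ℝ≥0∞ :=
  ∑' n, qpow Q n x y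

/-- The first-entrance kernel into `B`:
`E_B(x,y) = 1_B(y) Σ_{m≥0} Σ_{x_0=x,…,x_m=y, x_0,…,x_{m-1} ∉ B} Q(x_0,x_1)⋯Q(x_{m-1},x_m)`. -/
noncomputable def entKer {S : Type*} [DecidableEq S] (Q : S → S → ℝ≥0∞) (B : Finset S)
    (x y : S) : ℝ≥0∞ :=
  if y ∈ B then ∑' (m : ℕ), qpow (fun u v => if u ∈ B then 0 else Q u v) m x y else 0

/-- Cauchy-product style rearrangement in `ℝ≥0∞`. -/
lemma tsum_antidiag (f : ℕ → ℕ → ℝ≥0∞) :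
    ∑' n : ℕ, ∑ m ∈ Finset.range (n+1), f m (n-m) = ∑' m : ℕ, ∑' k : ℕ, f m k := by
  have h1 : ∀ n : ℕ, ∑ m ∈ Finset.range (n+1), f m (n-m)
      = ∑' p : ℕ × ℕ, if p.1 + p.2 = n then f p.1 p.2 else 0 := by
    intro n
    rw [tsum_eq_sum (s := (Finset.HasAntidiagonal.antidiagonal n : Finset (ℕ × ℕ)))
      (by intro p hp; rw [Finset.HasAntidiagonal.mem_antidiagonal] at hp; simp [hp])]
    rw [Finset.Nat.sum_antidiagonal_eq_sum_range_succ_mk]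
    apply Finset.sum_congr rfl
    intro i hi
    rw [Finset.mem_range] at hi
    simp [Nat.add_sub_cancel' (Nat.lt_succ_iff.mp hi)]
  simp_rw [h1]
  rw [ENNReal.tsum_comm]
  have h2 : ∀ p : ℕ × ℕ, (∑' n : ℕ, if p.1 + p.2 = n then f p.1 p.2 else 0) = f p.1 p.2 := by
    intro p
    rw [tsum_eq_single (p.1 + p.2) (by intro n hn; simp [Ne.symm hn])]
    simp
  calc ∑' (p : ℕ × ℕ), ∑' n : ℕ, (if p.1 + p.2 = n then f p.1 p.2 else 0)
      = ∑' (p : ℕ × ℕ), f p.1 p.2 := tsum_congr h2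
    _ = ∑' m : ℕ, ∑' k : ℕ, f m k := ENNReal.tsum_prod

/-- First-entrance decomposition of path weights: each path from `z` to `x ∈ B` of length `n`
splits uniquely at its first entrance time into `B`. -/
lemma qpow_first_entrance {S : Type*} [DecidableEq S] (Q : S → S → ℝ≥0∞) (B : Finset S)
    {x : S} (hx : x ∈ B) (n : ℕ) :
    ∀ z, qpow Q n z x =
      ∑ m ∈ Finset.range (n+1),
        ∑' y, (if y ∈ B then
          qpow (fun u v => if u ∈ B then (0:ℝ≥0∞) else Q u v) m z y * qpow Q (n-m) y x else 0) := by
  set Q' : S → S → ℝ≥0∞ := fun u v => if u ∈ B then (0:ℝ≥0∞) else Q u v with hQ'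
  induction n with
  | zero =>
    intro z
    rw [Finset.range_one, Finset.sum_singleton]
    rw [tsum_eq_single x (by
      intro y hy
      simp [qpow, hy])]
    simp [qpow, hx]
  | succ n ih =>
    intro z
    rw [Finset.sum_range_succ']
    by_cases hz : z ∈ B
    · have hT0 : (∑' y, (if y ∈ B then
          qpow Q' 0 z y * qpow Q ((n+1) - 0) y x else 0)) = qpow Q (n+1) z x := by
        rw [tsum_eq_single z (by intro y hy; simp [qpow, Ne.symm hy])]
        simp [qpow, hz]
      have hTm : ∀ m ∈ Finset.range (n+1), (∑' y, (if y ∈ B then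
          qpow Q' (m+1) z y * qpow Q ((n+1) - (m+1)) y x else 0)) = 0 := by
        intro m _
        have : ∀ y, qpow Q' (m+1) z y = 0 := by
          intro y
          show (∑' w, Q' z w * qpow Q' m w y) = 0
          simp [hQ', hz]
        simp [this]
      rw [Finset.sum_eq_zero hTm, hT0, zero_add]
    · have hT0 : (∑' y, (if y ∈ B then
          qpow Q' 0 z y * qpow Q ((n+1) - 0) y x else 0)) = 0 := by
        apply ENNReal.tsum_eq_zero.mpr
        intro y
        rcases eq_or_ne z y with rfl | h
        · simp [hz]
        · simp [qpow, h]
      rw [hT0, add_zero]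
      have hTm : ∀ m, (∑' y, (if y ∈ B then
          qpow Q' (m+1) z y * qpow Q ((n+1) - (m+1)) y x else 0))
          = ∑' w, Q z w * ∑' y, (if y ∈ B then qpow Q' m w y * qpow Q (n-m) y x else 0) := by
        intro m
        have step : ∀ y, (if y ∈ B then qpow Q' (m+1) z y * qpow Q ((n+1)-(m+1)) y x else 0)
            = ∑' w, Q z w * (if y ∈ B then qpow Q' m w y * qpow Q (n-m) y x else 0) := by
          intro y
          have h1 : qpow Q' (m+1) z y = ∑' w, Q z w * qpow Q' m w y := by
            show (∑' w, Q' z w * qpow Q' m w y) = _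
            apply tsum_congr; intro w; simp [hQ', hz]
          rw [Nat.succ_sub_succ, h1]
          by_cases hy : y ∈ B
          · simp only [hy, if_true]
            rw [← ENNReal.tsum_mul_right]
            apply tsum_congr; intro w; ring
          · simp [hy]
        rw [tsum_congr step, ENNReal.tsum_comm]
        apply tsum_congr
        intro w
        rw [ENNReal.tsum_mul_left]
      calc qpow Q (n+1) z x = ∑' w, Q z w * qpow Q n w x := rfl
        _ = ∑' w, Q z w * ∑ m ∈ Finset.range (n+1),
              ∑' y, (if y ∈ B then qpow Q' m w y * qpow Q (n-m) y x else 0) := by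
            apply tsum_congr; intro w; rw [ih w]
        _ = ∑' w, ∑ m ∈ Finset.range (n+1), Q z w *
              ∑' y, (if y ∈ B then qpow Q' m w y * qpow Q (n-m) y x else 0) := by
            apply tsum_congr; intro w; rw [Finset.mul_sum]
        _ = ∑ m ∈ Finset.range (n+1), ∑' w, Q z w *
              ∑' y, (if y ∈ B then qpow Q' m w y * qpow Q (n-m) y x else 0) := by
            rw [Summable.tsum_finsetSum (fun i _ => ENNReal.summable)]
        _ = ∑ m ∈ Finset.range (n+1), ∑' y, (if y ∈ B then
              qpow Q' (m+1) z y * qpow Q ((n+1) - (m+1)) y x else 0) := by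
            apply Finset.sum_congr rfl; intro m _; rw [hTm m]

/-- The Green's function restricted to `B` is invariant under the first-entrance kernel:
`(E_B G)(z, x) = G(z, x)` for `x ∈ B`. -/
lemma entKer_green {S : Type*} [DecidableEq S] (Q : S → S → ℝ≥0∞) (B : Finset S)
    {x : S} (hx : x ∈ B) (z : S) :
    ∑' y, entKer Q B z y * green Q y x = green Q z x := by
  set Q' : S → S → ℝ≥0∞ := fun u v => if u ∈ B then (0:ℝ≥0∞) else Q u v with hQ'
  have step : ∀ y, entKer Q B z y * green Q y x
      = ∑' m : ℕ, ∑' k : ℕ, (if y ∈ B then qpow Q' m z y * qpow Q k y x else 0) := by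
    intro y
    by_cases hy : y ∈ B
    · show (if y ∈ B then ∑' m : ℕ, qpow Q' m z y else 0) * green Q y x = _
      simp only [hy, if_true]
      rw [← ENNReal.tsum_mul_right]
      apply tsum_congr; intro m
      show qpow Q' m z y * ∑' k, qpow Q k y x = _
      rw [← ENNReal.tsum_mul_left]
    · show (if y ∈ B then ∑' m : ℕ, qpow Q' m z y else 0) * green Q y x = _
      simp [hy]
  calc ∑' y, entKer Q B z y * green Q y x
      = ∑' y, ∑' m : ℕ, ∑' k : ℕ, (if y ∈ B then qpow Q' m z y * qpow Q k y x else 0) :=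
        tsum_congr step
    _ = ∑' m : ℕ, ∑' y, ∑' k : ℕ, (if y ∈ B then qpow Q' m z y * qpow Q k y x else 0) :=
        ENNReal.tsum_comm
    _ = ∑' m : ℕ, ∑' k : ℕ, ∑' y, (if y ∈ B then qpow Q' m z y * qpow Q k y x else 0) :=
        tsum_congr (fun m => ENNReal.tsum_comm)
    _ = ∑' n : ℕ, ∑ m ∈ Finset.range (n+1),
          ∑' y, (if y ∈ B then qpow Q' m z y * qpow Q (n-m) y x else 0) :=
        (tsum_antidiag fun m k => ∑' y, (if y ∈ B then qpow Q' m z y * qpow Q k y x else 0)).symm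
    _ = ∑' n : ℕ, qpow Q n z x :=
        tsum_congr (fun n => (qpow_first_entrance Q B hx n z).symm)
    _ = green Q z x := rfl

/-- for a consistent entrance family `(μ̄_{B_n})` along `B_n ↑ S`, the
potentials are consistent: `(μ̄_{B_{n+1}} G)(x) = (μ̄_{B_n} G)(x)` for `x ∈ B_n`,
so `ν = lim_n μ̄_{B_n} G` is well defined. -/
theorem entranceFamily_potential_consistent {S : Type*} [Countable S] [DecidableEq S]
    (Q : S → S → ℝ≥0∞) (hG : ∀ x y, green Q x y < ⊤)
    (Bn : ℕ → Finset S) (hmono : ∀ n, Bn n ⊆ Bn (n + 1)) (hcover : ∀ x : S, ∃ n, x ∈ Bn n)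
    (μbar : ℕ → S → ℝ≥0∞)
    (hsupp : ∀ n, ∀ y ∉ Bn n, μbar n y = 0)
    (hfin : ∀ n, ∑' y, μbar n y < ⊤)
    (hcons : ∀ n y, μbar n y = ∑' x, μbar (n + 1) x * entKer Q (Bn n) x y) :
    ∀ n, ∀ x ∈ Bn n,
      ∑' z, μbar (n + 1) z * green Q z x = ∑' z, μbar n z * green Q z x := by
  intro n x hx
  calc ∑' z, μbar (n + 1) z * green Q z x
      = ∑' w, μbar (n + 1) w * ∑' z, entKer Q (Bn n) w z * green Q z x := by
        apply tsum_congr; intro w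
        rw [entKer_green Q (Bn n) hx w]
    _ = ∑' w, ∑' z, μbar (n + 1) w * (entKer Q (Bn n) w z * green Q z x) := by
        apply tsum_congr; intro w
        rw [ENNReal.tsum_mul_left]
    _ = ∑' z, ∑' w, μbar (n + 1) w * (entKer Q (Bn n) w z * green Q z x) :=
        ENNReal.tsum_comm
    _ = ∑' z, (∑' w, μbar (n + 1) w * entKer Q (Bn n) w z) * green Q z x := by
        apply tsum_congr; intro z
        rw [← ENNReal.tsum_mul_right]
        apply tsum_congr; intro w; rw [mul_assoc]
    _ = ∑' z, μbar n z * green Q z x := by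
        apply tsum_congr; intro z
        rw [← hcons n z]
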